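/- Let F ⊆ 2^[n] be shattering-extremal, let V ⊆ [n] with V ∉ F, and suppose there is a set S ⊆ [n] that is strongly shattered by F ∪ {V} but not strongly shattered by F. Then F ∪ {V} is shattering-extremal and Sh(F ∪ {V}) = Sh(F) ∪ {S}; in particular the VC dimension of F ∪ {V} is at most max(dim_VC(F), |S|). -/
import Mathlib


open scoped symmDiff

/-- `𝓕` shatters `S`: every subset of `S` is the trace of some member of `𝓕` on `S`. -/
def Shatters {n : ℕ} (𝓕 : Finset (Finset (Fin n))) (S : Finset (Fin n)) : Prop :=
  ∀ T ⊆ S, ∃ F ∈ 𝓕, F ∩ S = T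

/-- `𝓕` strongly shatters `S`: there is `I ⊆ [n] \ S` with `{H ∪ I : H ⊆ S} ⊆ 𝓕`. -/
def StronglyShatters {n : ℕ} (𝓕 : Finset (Finset (Fin n))) (S : Finset (Fin n)) : Prop :=
  ∃ I : Finset (Fin n), I ⊆ Sᶜ ∧ ∀ H ⊆ S, H ∪ I ∈ 𝓕

open Classical in
/-- The family of subsets of `[n]` shattered by `𝓕`. -/
noncomputable def Sh {n : ℕ} (𝓕 : Finset (Finset (Fin n))) : Finset (Finset (Fin n)) :=
  Finset.univ.filter (Shatters 𝓕)

open Classical in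
/-- The family of subsets of `[n]` strongly shattered by `𝓕`. -/
noncomputable def st {n : ℕ} (𝓕 : Finset (Finset (Fin n))) : Finset (Finset (Fin n)) :=
  Finset.univ.filter (StronglyShatters 𝓕)

/-- `𝓕` is shattering-extremal if it shatters exactly `|𝓕|` sets. -/
def Extremal {n : ℕ} (𝓕 : Finset (Finset (Fin n))) : Prop :=
  (Sh 𝓕).card = 𝓕.card

/-- The Vapnik–Chervonenkis dimension: the maximum cardinality of a shattered set. -/
noncomputable def dimVC {n : ℕ} (𝓕 : Finset (Finset (Fin n))) : ℕ :=
  (Sh 𝓕).sup Finset.card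

namespace ShAux

variable {n : ℕ}

@[simp] lemma mem_Sh {𝓕 : Finset (Finset (Fin n))} {A : Finset (Fin n)} :
    A ∈ Sh 𝓕 ↔ Shatters 𝓕 A := by
  classical
  simp [Sh]

def F0 (x : Fin n) (𝓕 : Finset (Finset (Fin n))) : Finset (Finset (Fin n)) :=
  𝓕.filter (fun F => x ∉ F)

def F1 (x : Fin n) (𝓕 : Finset (Finset (Fin n))) : Finset (Finset (Fin n)) :=
  (𝓕.filter (fun F => x ∈ F)).image (fun F => F.erase x)

def mu (𝓕 : Finset (Finset (Fin n))) : ℕ := ∑ F ∈ 𝓕, 2 ^ F.card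

lemma mem_F0 {x : Fin n} {𝓕 : Finset (Finset (Fin n))} {F : Finset (Fin n)} :
    F ∈ F0 x 𝓕 ↔ F ∈ 𝓕 ∧ x ∉ F := by simp [F0]

lemma mem_F1 {x : Fin n} {𝓕 : Finset (Finset (Fin n))} {F : Finset (Fin n)} :
    F ∈ F1 x 𝓕 ↔ x ∉ F ∧ insert x F ∈ 𝓕 := by
  simp only [F1, Finset.mem_image, Finset.mem_filter]
  constructor
  · rintro ⟨G, ⟨hG, hxG⟩, rfl⟩
    exact ⟨Finset.notMem_erase _ _, by rwa [Finset.insert_erase hxG]⟩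
  · rintro ⟨hxF, hF⟩
    exact ⟨insert x F, ⟨hF, Finset.mem_insert_self _ _⟩, by rw [Finset.erase_insert hxF]⟩

lemma card_F0_add_card_F1 (x : Fin n) (𝓕 : Finset (Finset (Fin n))) :
    (F0 x 𝓕).card + (F1 x 𝓕).card = 𝓕.card := by
  have h1 : (F1 x 𝓕).card = (𝓕.filter (fun F => x ∈ F)).card := by
    apply Finset.card_image_of_injOn
    intro F hF G hG hFG
    simp only [Finset.mem_coe, Finset.mem_filter] at hF hG
    have h2 := congrArg (insert x) hFG
    simpa only [Finset.insert_erase hF.2, Finset.insert_erase hG.2] using h2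
  rw [h1, F0, add_comm]
  exact Finset.card_filter_add_card_filter_not (fun F => x ∈ F)

lemma notMem_of_shatters {x : Fin n} {𝓗 : Finset (Finset (Fin n))} {A : Finset (Fin n)}
    (h𝓗 : ∀ F ∈ 𝓗, x ∉ F) (hA : Shatters 𝓗 A) : x ∉ A := by
  intro hxA
  obtain ⟨F, hF, hFA⟩ := hA A le_rfl
  exact h𝓗 F hF (by rw [← hFA] at hxA; exact (Finset.mem_inter.1 hxA).1)

lemma F0_avoids (x : Fin n) (𝓕 : Finset (Finset (Fin n))) : ∀ F ∈ F0 x 𝓕, x ∉ F :=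
  fun F hF => (mem_F0.1 hF).2

lemma F1_avoids (x : Fin n) (𝓕 : Finset (Finset (Fin n))) : ∀ F ∈ F1 x 𝓕, x ∉ F :=
  fun F hF => (mem_F1.1 hF).1

lemma G_avoids (x : Fin n) (𝓕 : Finset (Finset (Fin n))) : ∀ F ∈ F0 x 𝓕 ∩ F1 x 𝓕, x ∉ F :=
  fun F hF => F0_avoids x 𝓕 F (Finset.mem_of_mem_inter_left hF)

lemma U_avoids (x : Fin n) (𝓕 : Finset (Finset (Fin n))) : ∀ F ∈ F0 x 𝓕 ∪ F1 x 𝓕, x ∉ F :=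
  fun F hF => (Finset.mem_union.1 hF).elim (F0_avoids x 𝓕 F) (F1_avoids x 𝓕 F)

lemma sh_F0_subset (x : Fin n) (𝓕 : Finset (Finset (Fin n))) : Sh (F0 x 𝓕) ⊆ Sh 𝓕 := by
  intro A hA
  rw [mem_Sh] at hA ⊢
  intro T hT
  obtain ⟨F, hF, hFT⟩ := hA T hT
  exact ⟨F, (mem_F0.1 hF).1, hFT⟩

lemma sh_F1_subset (x : Fin n) (𝓕 : Finset (Finset (Fin n))) : Sh (F1 x 𝓕) ⊆ Sh 𝓕 := by
  intro A hA
  rw [mem_Sh] at hA ⊢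
  have hxA : x ∉ A := notMem_of_shatters (F1_avoids x 𝓕) hA
  intro T hT
  obtain ⟨F, hF, hFT⟩ := hA T hT
  obtain ⟨hxF, hins⟩ := mem_F1.1 hF
  refine ⟨insert x F, hins, ?_⟩
  rw [Finset.insert_inter_of_notMem hxA, hFT]

lemma sh_U_subset (x : Fin n) (𝓕 : Finset (Finset (Fin n))) :
    Sh (F0 x 𝓕 ∪ F1 x 𝓕) ⊆ Sh 𝓕 := by
  intro A hA
  rw [mem_Sh] at hA ⊢
  have hxA : x ∉ A := notMem_of_shatters (U_avoids x 𝓕) hA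
  intro T hT
  obtain ⟨F, hF, hFT⟩ := hA T hT
  rcases Finset.mem_union.1 hF with hF | hF
  · exact ⟨F, (mem_F0.1 hF).1, hFT⟩
  · obtain ⟨hxF, hins⟩ := mem_F1.1 hF
    refine ⟨insert x F, hins, ?_⟩
    rw [Finset.insert_inter_of_notMem hxA, hFT]

lemma erase_subset_of_subset_insert {x : Fin n} {T A : Finset (Fin n)}
    (hT : T ⊆ insert x A) : T.erase x ⊆ A := by
  intro a ha
  obtain ⟨hax, haT⟩ := Finset.mem_erase.1 ha
  rcases Finset.mem_insert.1 (hT haT) with rfl | h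
  · exact absurd rfl hax
  · exact h

lemma insert_shatters_of_inter {x : Fin n} {𝓕 : Finset (Finset (Fin n))} {A : Finset (Fin n)}
    (hxA : x ∉ A) (h0 : Shatters (F0 x 𝓕) A) (h1 : Shatters (F1 x 𝓕) A) :
    Shatters 𝓕 (insert x A) := by
  intro T hT
  by_cases hxT : x ∈ T
  · obtain ⟨F, hF, hFT⟩ := h1 (T.erase x) (erase_subset_of_subset_insert hT)
    obtain ⟨hxF, hins⟩ := mem_F1.1 hF
    refine ⟨insert x F, hins, ?_⟩
    rw [← Finset.insert_inter_distrib, hFT, Finset.insert_erase hxT]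
  · obtain ⟨F, hF, hFT⟩ := h0 T (fun a ha => by
      rcases Finset.mem_insert.1 (hT ha) with rfl | h
      · exact absurd ha hxT
      · exact h)
    refine ⟨F, (mem_F0.1 hF).1, ?_⟩
    rw [Finset.inter_insert_of_notMem (mem_F0.1 hF).2, hFT]

lemma insert_shatters_of_G {x : Fin n} {𝓕 : Finset (Finset (Fin n))} {A : Finset (Fin n)}
    (hxA : x ∉ A) (hG : Shatters (F0 x 𝓕 ∩ F1 x 𝓕) A) :
    Shatters 𝓕 (insert x A) := by
  intro T hT
  by_cases hxT : x ∈ T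
  · obtain ⟨F, hF, hFT⟩ := hG (T.erase x) (erase_subset_of_subset_insert hT)
    have hins := (mem_F1.1 (Finset.mem_of_mem_inter_right hF)).2
    refine ⟨insert x F, hins, ?_⟩
    rw [← Finset.insert_inter_distrib, hFT, Finset.insert_erase hxT]
  · obtain ⟨F, hF, hFT⟩ := hG T (fun a ha => by
      rcases Finset.mem_insert.1 (hT ha) with rfl | h
      · exact absurd ha hxT
      · exact h)
    have hF0 := mem_F0.1 (Finset.mem_of_mem_inter_left hF)
    refine ⟨F, hF0.1, ?_⟩
    rw [Finset.inter_insert_of_notMem hF0.2, hFT]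

/-- counting lemma: two disjoint pieces inside `cal`. -/
lemma count_aux {x : Fin n} {𝓐 𝓑 cal : Finset (Finset (Fin n))}
    (h𝓐 : 𝓐 ⊆ cal) (hx𝓐 : ∀ A ∈ 𝓐, x ∉ A) (hx𝓑 : ∀ B ∈ 𝓑, x ∉ B)
    (h𝓑 : ∀ B ∈ 𝓑, insert x B ∈ cal) :
    𝓐 ∪ 𝓑.image (insert x) ⊆ cal ∧
      (𝓐 ∪ 𝓑.image (insert x)).card = 𝓐.card + 𝓑.card := by
  have himg : ∀ C ∈ 𝓑.image (insert x), x ∈ C := by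
    intro C hC
    obtain ⟨B, hB, rfl⟩ := Finset.mem_image.1 hC
    exact Finset.mem_insert_self _ _
  constructor
  · intro C hC
    rcases Finset.mem_union.1 hC with h | h
    · exact h𝓐 h
    · obtain ⟨B, hB, rfl⟩ := Finset.mem_image.1 h
      exact h𝓑 B hB
  · rw [Finset.card_union_of_disjoint, Finset.card_image_of_injOn]
    · intro B hB B' hB' hBB'
      simp only [Finset.mem_coe] at hB hB'
      rw [← Finset.erase_insert (hx𝓑 B hB), hBB', Finset.erase_insert (hx𝓑 B' hB')]
    · rw [Finset.disjoint_left]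
      intro C hC hC'
      exact hx𝓐 C hC (himg C hC')

end ShAux

namespace ShAux

variable {n : ℕ}

lemma mu_F0_F1_lt {x : Fin n} {𝓕 : Finset (Finset (Fin n))} (hx : ∃ F ∈ 𝓕, x ∈ F) :
    mu (F0 x 𝓕) + mu (F1 x 𝓕) < mu 𝓕 := by
  obtain ⟨F₀, hF₀, hxF₀⟩ := hx
  have hne : (𝓕.filter (fun F => x ∈ F)).Nonempty := ⟨F₀, Finset.mem_filter.2 ⟨hF₀, hxF₀⟩⟩
  have hsplit : mu (F0 x 𝓕) + ∑ F ∈ 𝓕.filter (fun F => x ∈ F), 2 ^ F.card = mu 𝓕 := by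
    rw [mu, mu, F0, add_comm]
    exact Finset.sum_filter_add_sum_filter_not 𝓕 (fun F => x ∈ F) _
  have hmuF1 : mu (F1 x 𝓕) = ∑ F ∈ 𝓕.filter (fun F => x ∈ F), 2 ^ (F.erase x).card := by
    rw [mu, F1]
    apply Finset.sum_image
    intro F hF G hG hFG
    have hF' := (Finset.mem_filter.1 hF).2
    have hG' := (Finset.mem_filter.1 hG).2
    have h2 := congrArg (insert x) hFG
    simpa only [Finset.insert_erase hF', Finset.insert_erase hG'] using h2
  have hlt : ∑ F ∈ 𝓕.filter (fun F => x ∈ F), 2 ^ (F.erase x).card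
      < ∑ F ∈ 𝓕.filter (fun F => x ∈ F), 2 ^ F.card := by
    apply Finset.sum_lt_sum_of_nonempty hne
    intro F hF
    have hxF := (Finset.mem_filter.1 hF).2
    have hcard : (F.erase x).card < F.card := Finset.card_erase_lt_of_mem hxF
    exact Nat.pow_lt_pow_right one_lt_two hcard
  omega

lemma mu_F0_lt {x : Fin n} {𝓕 : Finset (Finset (Fin n))} (hx : ∃ F ∈ 𝓕, x ∈ F) :
    mu (F0 x 𝓕) < mu 𝓕 := lt_of_le_of_lt (Nat.le_add_right _ _) (mu_F0_F1_lt hx)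

lemma mu_F1_lt {x : Fin n} {𝓕 : Finset (Finset (Fin n))} (hx : ∃ F ∈ 𝓕, x ∈ F) :
    mu (F1 x 𝓕) < mu 𝓕 := lt_of_le_of_lt (Nat.le_add_left _ _) (mu_F0_F1_lt hx)

lemma mu_mono {𝓕 𝓖 : Finset (Finset (Fin n))} (h : 𝓕 ⊆ 𝓖) : mu 𝓕 ≤ mu 𝓖 :=
  Finset.sum_le_sum_of_subset h

lemma mu_G_lt {x : Fin n} {𝓕 : Finset (Finset (Fin n))} (hx : ∃ F ∈ 𝓕, x ∈ F) :
    mu (F0 x 𝓕 ∩ F1 x 𝓕) < mu 𝓕 :=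
  lt_of_le_of_lt (mu_mono Finset.inter_subset_right) (mu_F1_lt hx)

lemma mu_U_lt {x : Fin n} {𝓕 : Finset (Finset (Fin n))} (hx : ∃ F ∈ 𝓕, x ∈ F) :
    mu (F0 x 𝓕 ∪ F1 x 𝓕) < mu 𝓕 := by
  have h1 : mu (F0 x 𝓕 ∪ F1 x 𝓕) ≤ mu (F0 x 𝓕) + mu (F1 x 𝓕) := by
    have := Finset.sum_union_inter (s₁ := F0 x 𝓕) (s₂ := F1 x 𝓕) (f := fun F => 2 ^ F.card)
    rw [mu, mu, mu]
    omega
  exact lt_of_le_of_lt h1 (mu_F0_F1_lt hx)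

lemma shatters_empty_of_mem {𝓕 : Finset (Finset (Fin n))} (h : 𝓕.Nonempty) :
    Shatters 𝓕 (∅ : Finset (Fin n)) := by
  intro T hT
  obtain ⟨F, hF⟩ := h
  exact ⟨F, hF, by rw [Finset.inter_empty, Finset.subset_empty.1 hT]⟩

lemma pajor_aux : ∀ (N : ℕ) (𝓕 : Finset (Finset (Fin n))), mu 𝓕 ≤ N →
    𝓕.card ≤ (Sh 𝓕).card := by
  intro N
  induction N using Nat.strong_induction_on with
  | _ N ih =>
    intro 𝓕 hmu
    by_cases hx : ∃ F ∈ 𝓕, ∃ x, x ∈ F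
    · obtain ⟨F₀, hF₀, x, hxF₀⟩ := hx
      have hex : ∃ F ∈ 𝓕, x ∈ F := ⟨F₀, hF₀, hxF₀⟩
      have h0 : (F0 x 𝓕).card ≤ (Sh (F0 x 𝓕)).card :=
        ih _ (lt_of_lt_of_le (mu_F0_lt hex) hmu) _ le_rfl
      have h1 : (F1 x 𝓕).card ≤ (Sh (F1 x 𝓕)).card :=
        ih _ (lt_of_lt_of_le (mu_F1_lt hex) hmu) _ le_rfl
      have hsub : Sh (F0 x 𝓕) ∪ Sh (F1 x 𝓕) ⊆ Sh 𝓕 :=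
        Finset.union_subset (sh_F0_subset x 𝓕) (sh_F1_subset x 𝓕)
      have hxavoid : ∀ A ∈ Sh (F0 x 𝓕) ∪ Sh (F1 x 𝓕), x ∉ A := by
        intro A hA
        rcases Finset.mem_union.1 hA with h | h
        · exact notMem_of_shatters (F0_avoids x 𝓕) (mem_Sh.1 h)
        · exact notMem_of_shatters (F1_avoids x 𝓕) (mem_Sh.1 h)
      have hxavoid2 : ∀ B ∈ Sh (F0 x 𝓕) ∩ Sh (F1 x 𝓕), x ∉ B := fun B hB =>
        hxavoid B (Finset.mem_union_left _ (Finset.mem_of_mem_inter_left hB))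
      have hins : ∀ B ∈ Sh (F0 x 𝓕) ∩ Sh (F1 x 𝓕), insert x B ∈ Sh 𝓕 := by
        intro B hB
        exact mem_Sh.2 (insert_shatters_of_inter (hxavoid2 B hB)
          (mem_Sh.1 (Finset.mem_of_mem_inter_left hB))
          (mem_Sh.1 (Finset.mem_of_mem_inter_right hB)))
      obtain ⟨hsub2, hcard2⟩ := count_aux hsub hxavoid hxavoid2 hins
      have hle := Finset.card_le_card hsub2
      have huai := Finset.card_union_add_card_inter (Sh (F0 x 𝓕)) (Sh (F1 x 𝓕))
      have hcards := card_F0_add_card_F1 x 𝓕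
      omega
    · push_neg at hx
      have hsub : 𝓕 ⊆ {∅} := fun F hF =>
        Finset.mem_singleton.2 (Finset.eq_empty_iff_forall_notMem.2 (hx F hF))
      rcases Finset.subset_singleton_iff.1 hsub with rfl | rfl
      · simp
      · have : (∅ : Finset (Fin n)) ∈ Sh {∅} :=
          mem_Sh.2 (shatters_empty_of_mem ⟨∅, Finset.mem_singleton_self _⟩)
        calc ({∅} : Finset (Finset (Fin n))).card = 1 := Finset.card_singleton _
        _ ≤ (Sh {∅}).card := Finset.card_pos.2 ⟨∅, this⟩

lemma pajor (𝓕 : Finset (Finset (Fin n))) : 𝓕.card ≤ (Sh 𝓕).card :=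
  pajor_aux (mu 𝓕) 𝓕 le_rfl

end ShAux

namespace ShAux

variable {n : ℕ}

lemma br_aux : ∀ (N : ℕ) (𝓕 : Finset (Finset (Fin n))), mu 𝓕 ≤ N →
    (Sh 𝓕).card = 𝓕.card → ∀ A, Shatters 𝓕 A → StronglyShatters 𝓕 A := by
  intro N
  induction N using Nat.strong_induction_on with
  | _ N ih =>
    intro 𝓕 hmu hext A hA
    by_cases hx0 : ∃ F ∈ 𝓕, ∃ x, x ∈ F
    swap
    · -- degenerate: every member is empty
      push_neg at hx0
      have hsub : 𝓕 ⊆ {∅} := fun F hF =>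
        Finset.mem_singleton.2 (Finset.eq_empty_iff_forall_notMem.2 (hx0 F hF))
      have hAempty : A = ∅ := by
        obtain ⟨F, hF, hFA⟩ := hA A le_rfl
        have : F = ∅ := Finset.mem_singleton.1 (hsub hF)
        rw [this, Finset.empty_inter] at hFA
        exact hFA.symm
      obtain ⟨F, hF, -⟩ := hA A le_rfl
      refine ⟨∅, by simp, ?_⟩
      intro H hH
      rw [hAempty] at hH
      rw [Finset.subset_empty.1 hH, Finset.empty_union]
      have : F = ∅ := Finset.mem_singleton.1 (hsub hF)
      rwa [← this]
    obtain ⟨F₀, hF₀, x, hxF₀⟩ := hx0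
    have hex : ∃ F ∈ 𝓕, x ∈ F := ⟨F₀, hF₀, hxF₀⟩
    -- Pajor bounds for the four derived families
    have p0 : (F0 x 𝓕).card ≤ (Sh (F0 x 𝓕)).card := pajor _
    have p1 : (F1 x 𝓕).card ≤ (Sh (F1 x 𝓕)).card := pajor _
    have pU : (F0 x 𝓕 ∪ F1 x 𝓕).card ≤ (Sh (F0 x 𝓕 ∪ F1 x 𝓕)).card := pajor _
    have pG : (F0 x 𝓕 ∩ F1 x 𝓕).card ≤ (Sh (F0 x 𝓕 ∩ F1 x 𝓕)).card := pajor _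
    -- chain 1 data
    have hxavoid : ∀ A' ∈ Sh (F0 x 𝓕) ∪ Sh (F1 x 𝓕), x ∉ A' := by
      intro A' hA'
      rcases Finset.mem_union.1 hA' with h | h
      · exact notMem_of_shatters (F0_avoids x 𝓕) (mem_Sh.1 h)
      · exact notMem_of_shatters (F1_avoids x 𝓕) (mem_Sh.1 h)
    have hxavoid2 : ∀ B ∈ Sh (F0 x 𝓕) ∩ Sh (F1 x 𝓕), x ∉ B := fun B hB =>
      hxavoid B (Finset.mem_union_left _ (Finset.mem_of_mem_inter_left hB))
    obtain ⟨hsub1, hcard1⟩ := count_aux (x := x)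
      (Finset.union_subset (sh_F0_subset x 𝓕) (sh_F1_subset x 𝓕)) hxavoid hxavoid2
      (fun B hB => mem_Sh.2 (insert_shatters_of_inter (hxavoid2 B hB)
        (mem_Sh.1 (Finset.mem_of_mem_inter_left hB))
        (mem_Sh.1 (Finset.mem_of_mem_inter_right hB))))
    -- chain 2 data
    have hxavoidU : ∀ A' ∈ Sh (F0 x 𝓕 ∪ F1 x 𝓕), x ∉ A' := fun A' hA' =>
      notMem_of_shatters (U_avoids x 𝓕) (mem_Sh.1 hA')
    have hxavoidG : ∀ B ∈ Sh (F0 x 𝓕 ∩ F1 x 𝓕), x ∉ B := fun B hB =>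
      notMem_of_shatters (G_avoids x 𝓕) (mem_Sh.1 hB)
    obtain ⟨hsub2, hcard2⟩ := count_aux (x := x)
      (sh_U_subset x 𝓕) hxavoidU hxavoidG
      (fun B hB => mem_Sh.2 (insert_shatters_of_G (hxavoidG B hB) (mem_Sh.1 hB)))
    have hle1 := Finset.card_le_card hsub1
    have hle2 := Finset.card_le_card hsub2
    have huai1 := Finset.card_union_add_card_inter (Sh (F0 x 𝓕)) (Sh (F1 x 𝓕))
    have huaiF := Finset.card_union_add_card_inter (F0 x 𝓕) (F1 x 𝓕)
    have hcards := card_F0_add_card_F1 x 𝓕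
    -- extremality of the derived families and set equalities
    have e0 : (Sh (F0 x 𝓕)).card = (F0 x 𝓕).card := by omega
    have e1 : (Sh (F1 x 𝓕)).card = (F1 x 𝓕).card := by omega
    have eU : (Sh (F0 x 𝓕 ∪ F1 x 𝓕)).card = (F0 x 𝓕 ∪ F1 x 𝓕).card := by omega
    have eG : (Sh (F0 x 𝓕 ∩ F1 x 𝓕)).card = (F0 x 𝓕 ∩ F1 x 𝓕).card := by omega
    have hset1 : Sh (F0 x 𝓕) ∪ Sh (F1 x 𝓕) ∪
        (Sh (F0 x 𝓕) ∩ Sh (F1 x 𝓕)).image (insert x) = Sh 𝓕 :=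
      Finset.eq_of_subset_of_card_le hsub1 (by omega)
    have hset2 : Sh (F0 x 𝓕 ∪ F1 x 𝓕) ∪
        (Sh (F0 x 𝓕 ∩ F1 x 𝓕)).image (insert x) = Sh 𝓕 :=
      Finset.eq_of_subset_of_card_le hsub2 (by omega)
    -- now split on whether x ∈ A
    by_cases hxA : x ∈ A
    · -- use chain 2: A = insert x B with B shattered by the intersection family
      have hAmem : A ∈ Sh 𝓕 := mem_Sh.2 hA
      rw [← hset2] at hAmem
      rcases Finset.mem_union.1 hAmem with h | h
      · exact absurd hxA (hxavoidU A h)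
      obtain ⟨B, hB, rfl⟩ := Finset.mem_image.1 h
      have hxB : x ∉ B := hxavoidG B hB
      have hGmu : mu (F0 x 𝓕 ∩ F1 x 𝓕) < N := lt_of_lt_of_le (mu_G_lt hex) hmu
      obtain ⟨I, hI, hmem⟩ := ih _ hGmu _ le_rfl eG B (mem_Sh.1 hB)
      have hIG : I ∈ F0 x 𝓕 ∩ F1 x 𝓕 := by
        have := hmem ∅ (Finset.empty_subset B)
        rwa [Finset.empty_union] at this
      have hxI : x ∉ I := G_avoids x 𝓕 I hIG
      refine ⟨I, ?_, ?_⟩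
      · intro a ha
        have haB := hI ha
        rw [Finset.mem_compl] at haB ⊢
        intro hmem2
        rcases Finset.mem_insert.1 hmem2 with rfl | h'
        · exact hxI ha
        · exact haB h'
      · intro H hH
        by_cases hxH : x ∈ H
        · have hsubB : H.erase x ⊆ B := erase_subset_of_subset_insert hH
          have h1 := hmem (H.erase x) hsubB
          have h2 := (mem_F1.1 (Finset.mem_of_mem_inter_right h1)).2
          have : insert x (H.erase x ∪ I) = H ∪ I := by
            rw [← Finset.insert_union, Finset.insert_erase hxH]
          rwa [this] at h2
        · have hsubB : H ⊆ B := fun a ha => by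
            rcases Finset.mem_insert.1 (hH ha) with rfl | h'
            · exact absurd ha hxH
            · exact h'
          exact (mem_F0.1 (Finset.mem_of_mem_inter_left (hmem H hsubB))).1
    · -- use chain 1: A is shattered by F0 or F1
      have hAmem : A ∈ Sh 𝓕 := mem_Sh.2 hA
      rw [← hset1] at hAmem
      rcases Finset.mem_union.1 hAmem with h | h
      swap
      · obtain ⟨B, hB, rfl⟩ := Finset.mem_image.1 h
        exact absurd (Finset.mem_insert_self x B) hxA
      rcases Finset.mem_union.1 h with h | h
      · -- A shattered by F0
        have h0mu : mu (F0 x 𝓕) < N := lt_of_lt_of_le (mu_F0_lt hex) hmu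
        obtain ⟨I, hI, hmem⟩ := ih _ h0mu _ le_rfl e0 A (mem_Sh.1 h)
        exact ⟨I, hI, fun H hH => (mem_F0.1 (hmem H hH)).1⟩
      · -- A shattered by F1
        have h1mu : mu (F1 x 𝓕) < N := lt_of_lt_of_le (mu_F1_lt hex) hmu
        obtain ⟨I, hI, hmem⟩ := ih _ h1mu _ le_rfl e1 A (mem_Sh.1 h)
        refine ⟨insert x I, ?_, ?_⟩
        · intro a ha
          rcases Finset.mem_insert.1 ha with rfl | h'
          · exact Finset.mem_compl.2 hxA
          · exact hI h'
        · intro H hH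
          have h1 := (mem_F1.1 (hmem H hH)).2
          have : H ∪ insert x I = insert x (H ∪ I) := by ext a; simp [Finset.mem_insert, Finset.mem_union, or_comm, or_left_comm, or_assoc]
          rwa [this]

lemma br {𝓕 : Finset (Finset (Fin n))} (hext : (Sh 𝓕).card = 𝓕.card)
    {A : Finset (Fin n)} (hA : Shatters 𝓕 A) : StronglyShatters 𝓕 A :=
  br_aux (mu 𝓕) 𝓕 le_rfl hext A hA

end ShAux


open ShAux

/-- Adding to a shattering-extremal family a new set which strongly shatters exactly
one new set `S` keeps the family shattering-extremal; the family of shattered sets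
grows exactly by `S`, and the VC dimension is at most `max (dimVC 𝓕) |S|`. -/
theorem insert_extremal_of_new_strongly_shattered (n : ℕ)
    (𝓕 : Finset (Finset (Fin n))) (h : Extremal 𝓕)
    (V : Finset (Fin n)) (hV : V ∉ 𝓕) (S : Finset (Fin n))
    (hnew : StronglyShatters (insert V 𝓕) S) (hold : ¬ StronglyShatters 𝓕 S) :
    Extremal (insert V 𝓕) ∧ Sh (insert V 𝓕) = insert S (Sh 𝓕) ∧
      dimVC (insert V 𝓕) ≤ max (dimVC 𝓕) S.card := by
  obtain ⟨I, hI, hIH⟩ := hnew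
  have hIS : ∀ a ∈ I, a ∉ S := fun a ha => Finset.mem_compl.1 (hI ha)
  -- there is H₀ ⊆ S with H₀ ∪ I = V
  have hVIS : ∃ H₀ ⊆ S, H₀ ∪ I = V := by
    by_contra hc
    push_neg at hc
    refine hold ⟨I, hI, fun H hH => ?_⟩
    rcases Finset.mem_insert.1 (hIH H hH) with h' | h'
    · exact absurd h' (hc H hH)
    · exact h'
  obtain ⟨H₀, hH₀S, hH₀⟩ := hVIS
  have hH0eq : H₀ = V ∩ S := by
    rw [← hH₀]; ext a
    simp only [Finset.mem_inter, Finset.mem_union]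
    constructor
    · intro ha; exact ⟨Or.inl ha, hH₀S ha⟩
    · rintro ⟨ha | ha, haS⟩
      · exact ha
      · exact absurd haS (hIS a ha)
  have hIeq : ∀ a, a ∈ I ↔ a ∈ V ∧ a ∉ S := by
    intro a
    constructor
    · intro ha; exact ⟨hH₀ ▸ Finset.mem_union_right _ ha, hIS a ha⟩
    · rintro ⟨haV, haS⟩
      rcases Finset.mem_union.1 (hH₀ ▸ haV : a ∈ H₀ ∪ I) with h' | h'
      · exact absurd (hH₀S h') haS
      · exact h'
  -- every H ⊆ S except V ∩ S has H ∪ I in 𝓕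
  have claim2 : ∀ H ⊆ S, H ≠ V ∩ S → H ∪ I ∈ 𝓕 := by
    intro H hH hne
    rcases Finset.mem_insert.1 (hIH H hH) with h' | h'
    · exfalso
      apply hne
      have h2 : (H ∪ I) ∩ S = H := by
        ext a
        simp only [Finset.mem_inter, Finset.mem_union]
        constructor
        · rintro ⟨haH | haI, haS⟩
          · exact haH
          · exact absurd haS (hIS a haI)
        · intro ha; exact ⟨Or.inl ha, hH ha⟩
      rw [h'] at h2
      exact h2.symm
    · exact h'
  -- S is shattered by the extended family
  have hSsh' : Shatters (insert V 𝓕) S := by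
    intro T hT
    refine ⟨T ∪ I, hIH T hT, ?_⟩
    ext a
    simp only [Finset.mem_inter, Finset.mem_union]
    constructor
    · rintro ⟨haT | haI, haS⟩
      · exact haT
      · exact absurd haS (hIS a haI)
    · intro ha; exact ⟨Or.inl ha, hT ha⟩
  -- but not by 𝓕 (since 𝓕 is extremal, shattering implies strong shattering)
  have hSnotSh : ¬ Shatters 𝓕 S := fun hsh => hold (br h hsh)
  -- key claim: any set shattered by the extended family but not by 𝓕 equals S
  have key : ∀ T, Shatters (insert V 𝓕) T → ¬ Shatters 𝓕 T → T = S := by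
    intro T hT' hT
    have hmiss : ∀ H ⊆ T, H ≠ V ∩ T → ∃ F ∈ 𝓕, F ∩ T = H := by
      intro H hH hne
      obtain ⟨F, hF, hFT⟩ := hT' H hH
      rcases Finset.mem_insert.1 hF with rfl | hF2
      · exact absurd hFT.symm hne
      · exact ⟨F, hF2, hFT⟩
    have hnoV : ¬ ∃ F ∈ 𝓕, F ∩ T = V ∩ T := by
      rintro ⟨F, hF, hFT⟩
      apply hT
      intro H hH
      by_cases he : H = V ∩ T
      · exact ⟨F, hF, he ▸ hFT⟩
      · exact hmiss H hH he
    have hST : S ⊆ T := by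
      intro x hxS
      by_contra hxT
      set H : Finset (Fin n) := if x ∈ V then (V ∩ S).erase x else insert x (V ∩ S)
        with hHdef
      have hHa : ∀ a, a ≠ x → (a ∈ H ↔ a ∈ V ∧ a ∈ S) := by
        intro a hax
        by_cases hxV : x ∈ V <;>
          simp [hHdef, hxV, hax, Finset.mem_erase, Finset.mem_insert, Finset.mem_inter]
      have hHS : H ⊆ S := by
        intro a ha
        by_cases hax : a = x
        · exact hax ▸ hxS
        · exact ((hHa a hax).1 ha).2
      have hHne : H ≠ V ∩ S := by
        by_cases hxV : x ∈ V
        · intro he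
          have h1 : x ∉ H := by rw [hHdef, if_pos hxV]; exact Finset.notMem_erase x _
          exact h1 (he ▸ Finset.mem_inter.2 ⟨hxV, hxS⟩)
        · intro he
          have h1 : x ∈ H := by rw [hHdef, if_neg hxV]; exact Finset.mem_insert_self x _
          exact hxV (Finset.mem_inter.1 (he ▸ h1)).1
      refine hnoV ⟨H ∪ I, claim2 H hHS hHne, ?_⟩
      ext a
      simp only [Finset.mem_inter, Finset.mem_union]
      constructor
      · rintro ⟨haH | haI, haT⟩
        · have hax : a ≠ x := fun he => hxT (he ▸ haT)
          exact ⟨((hHa a hax).1 haH).1, haT⟩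
        · exact ⟨((hIeq a).1 haI).1, haT⟩
      · rintro ⟨haV, haT⟩
        have hax : a ≠ x := fun he => hxT (he ▸ haT)
        by_cases haS : a ∈ S
        · exact ⟨Or.inl ((hHa a hax).2 ⟨haV, haS⟩), haT⟩
        · exact ⟨Or.inr ((hIeq a).2 ⟨haV, haS⟩), haT⟩
    have hTS : T ⊆ S := by
      intro y hyT
      by_contra hyS
      apply hSnotSh
      intro H hHS2
      set W : Finset (Fin n) := (V ∩ T) \ S with hWdef
      set X : Finset (Fin n) := if y ∈ V then W.erase y else insert y W with hXdef
      have hWa : ∀ a, a ∈ W ↔ a ∈ V ∧ a ∈ T ∧ a ∉ S := by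
        intro a
        simp [hWdef, Finset.mem_sdiff, Finset.mem_inter, and_assoc]
      have hXa : ∀ a, a ≠ y → (a ∈ X ↔ a ∈ V ∧ a ∈ T ∧ a ∉ S) := by
        intro a hay
        by_cases hyV : y ∈ V <;>
          simp [hXdef, hyV, hay, Finset.mem_erase, Finset.mem_insert, hWa a]
      have hXS : ∀ a ∈ X, a ∉ S := by
        intro a ha
        by_cases hay : a = y
        · exact hay ▸ hyS
        · exact ((hXa a hay).1 ha).2.2
      have hXT : ∀ a ∈ X, a ∈ T := by
        intro a ha
        by_cases hay : a = y
        · exact hay ▸ hyT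
        · exact ((hXa a hay).1 ha).2.1
      have hsubT : H ∪ X ⊆ T := by
        intro a ha
        rcases Finset.mem_union.1 ha with h' | h'
        · exact hST (hHS2 h')
        · exact hXT a h'
      have hXne : H ∪ X ≠ V ∩ T := by
        by_cases hyV : y ∈ V
        · intro he
          have h1 : y ∉ H ∪ X := by
            rw [Finset.mem_union]
            rintro (h' | h')
            · exact hyS (hHS2 h')
            · rw [hXdef, if_pos hyV] at h'
              exact Finset.notMem_erase y _ h'
          exact h1 (he ▸ Finset.mem_inter.2 ⟨hyV, hyT⟩)
        · intro he
          have h1 : y ∈ H ∪ X := Finset.mem_union_right _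
            (by rw [hXdef, if_neg hyV]; exact Finset.mem_insert_self y _)
          exact hyV (Finset.mem_inter.1 (he ▸ h1)).1
      obtain ⟨F, hF, hFT⟩ := hmiss (H ∪ X) hsubT hXne
      refine ⟨F, hF, ?_⟩
      have h2 : F ∩ S = (F ∩ T) ∩ S := by
        ext a
        simp only [Finset.mem_inter]
        exact ⟨fun ⟨h1, h2⟩ => ⟨⟨h1, hST h2⟩, h2⟩, fun ⟨⟨h1, _⟩, h3⟩ => ⟨h1, h3⟩⟩
      rw [h2, hFT]
      ext a
      simp only [Finset.mem_inter, Finset.mem_union]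
      constructor
      · rintro ⟨haH | haX, haS⟩
        · exact haH
        · exact absurd haS (hXS a haX)
      · intro ha
        exact ⟨Or.inl ha, hHS2 ha⟩
    exact Finset.Subset.antisymm hTS hST
  -- the set of shattered sets of the extended family
  have hShEq : Sh (insert V 𝓕) = insert S (Sh 𝓕) := by
    apply Finset.Subset.antisymm
    · intro T hTm
      rw [mem_Sh] at hTm
      by_cases hT : Shatters 𝓕 T
      · exact Finset.mem_insert_of_mem (mem_Sh.2 hT)
      · rw [key T hTm hT]
        exact Finset.mem_insert_self _ _
    · intro T hTm
      rcases Finset.mem_insert.1 hTm with rfl | hTm2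
      · exact mem_Sh.2 hSsh'
      · rw [mem_Sh] at hTm2 ⊢
        intro T' hT'
        obtain ⟨F, hF, hFT⟩ := hTm2 T' hT'
        exact ⟨F, Finset.mem_insert_of_mem hF, hFT⟩
  have hSnot : S ∉ Sh 𝓕 := fun hc => hSnotSh (mem_Sh.1 hc)
  refine ⟨?_, hShEq, ?_⟩
  · rw [Extremal, hShEq, Finset.card_insert_of_notMem hSnot,
      Finset.card_insert_of_notMem hV, h]
  · rw [dimVC, hShEq, Finset.sup_insert]
    rw [max_comm]
    exact le_of_eq rfl
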